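/- Recursive leakage decomposition across chained blocks: suppose M^{m−1} → (M_m, E_m) → Y_{e,m} and (M_m, E_m, Y_{e,m}) → (M^{m−1}, E_{m−1}) → Y_e^{m−1} are Markov chains conditioned on F^m. Then I(M^m, E_m; Y_e^m | F^m) ≤ I(M_m, E_m; Y_{e,m} | F^m) + I(M^{m−1}, E_{m−1}; Y_e^{m−1} | F^m). -/

import Mathlib

set_option synthInstance.maxSize 1024
set_option maxHeartbeats 1000000



noncomputable def distOf {Ω α : Type*} [Fintype Ω] [DecidableEq α]
    (p : Ω → ℝ) (f : Ω → α) : α → ℝ :=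
  fun a => ∑ ω ∈ Finset.univ.filter (fun ω => f ω = a), p ω

noncomputable def entOf {Ω α : Type*} [Fintype Ω] [Fintype α] [DecidableEq α]
    (p : Ω → ℝ) (f : Ω → α) : ℝ :=
  (∑ a, Real.negMulLog (distOf p f a)) / Real.log 2

noncomputable def condEntOf {Ω α β : Type*} [Fintype Ω] [Fintype α] [DecidableEq α]
    [Fintype β] [DecidableEq β] (p : Ω → ℝ) (f : Ω → α) (g : Ω → β) : ℝ :=
  entOf p (fun ω => (f ω, g ω)) - entOf p g

/-- Conditional mutual information I(f ; g | h) = H(f|h) − H(f|g,h), in bits. -/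
noncomputable def condMutInfoOf {Ω α β γ : Type*} [Fintype Ω] [Fintype α] [DecidableEq α]
    [Fintype β] [DecidableEq β] [Fintype γ] [DecidableEq γ]
    (p : Ω → ℝ) (f : Ω → α) (g : Ω → β) (h : Ω → γ) : ℝ :=
  condEntOf p f h - condEntOf p f (fun ω => (g ω, h ω))

lemma distOf_nonneg {Ω α : Type*} [Fintype Ω] [DecidableEq α]
    (p : Ω → ℝ) (hp : ∀ ω, 0 ≤ p ω) (f : Ω → α) (a : α) : 0 ≤ distOf p f a :=
  Finset.sum_nonneg fun ω _ => hp ω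

lemma distOf_eq_sum_ite {Ω α : Type*} [Fintype Ω] [DecidableEq α]
    (p : Ω → ℝ) (f : Ω → α) (a : α) :
    distOf p f a = ∑ ω, if f ω = a then p ω else 0 := by
  rw [distOf, Finset.sum_filter]

lemma sum3_comm {α β γ M : Type*} [AddCommMonoid M] [Fintype α] [Fintype β] [Fintype γ]
    (F : α → β → γ → M) :
    (∑ a, ∑ b, ∑ c, F a b c) = ∑ c, ∑ a, ∑ b, F a b c := by
  calc (∑ a, ∑ b, ∑ c, F a b c) = ∑ a, ∑ c, ∑ b, F a b c :=
        Finset.sum_congr rfl fun a _ => Finset.sum_comm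
    _ = ∑ c, ∑ a, ∑ b, F a b c := Finset.sum_comm

lemma entOf_congr {Ω α β : Type*} [Fintype Ω] [Fintype α] [DecidableEq α]
    [Fintype β] [DecidableEq β] (p : Ω → ℝ) (f : Ω → α) (g : Ω → β)
    (i : α → β) (hi : Function.Injective i) (hfg : ∀ ω, g ω = i (f ω)) :
    entOf p g = entOf p f := by
  have hd : ∀ a, distOf p g (i a) = distOf p f a := by
    intro a
    simp only [distOf_eq_sum_ite]
    refine Finset.sum_congr rfl fun ω _ => ?_
    rw [hfg ω]
    by_cases h : f ω = a
    · simp [h]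
    · simp only [if_neg h, if_neg (fun hh => h (hi hh))]
  have hz : ∀ b, b ∉ Finset.univ.image i → distOf p g b = 0 := by
    intro b hb
    rw [distOf_eq_sum_ite]
    refine Finset.sum_eq_zero fun ω _ => ?_
    have : g ω ≠ b := by
      intro h; exact hb (by simpa [← h, hfg ω] using Finset.mem_image_of_mem i (Finset.mem_univ (f ω)))
    simp [this]
  unfold entOf
  congr 1
  rw [← Finset.sum_subset (Finset.subset_univ (Finset.univ.image i))
    (fun b _ hb => by rw [hz b hb, Real.negMulLog_zero]),
    Finset.sum_image (fun a _ b _ h => hi h)]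
  exact Finset.sum_congr rfl fun a _ => by rw [hd]

lemma submodular_key {α β γ : Type*} [Fintype α] [Fintype β] [Fintype γ]
    (q : α → β → γ → ℝ) (hq : ∀ a b c, 0 ≤ q a b c) :
    (∑ a, ∑ b, ∑ c, Real.negMulLog (q a b c)) + ∑ c, Real.negMulLog (∑ a, ∑ b, q a b c)
      ≤ (∑ a, ∑ c, Real.negMulLog (∑ b, q a b c))
        + ∑ b, ∑ c, Real.negMulLog (∑ a, q a b c) := by
  set qac : α → γ → ℝ := fun a c => ∑ b, q a b c with hqac
  set qbc : β → γ → ℝ := fun b c => ∑ a, q a b c with hqbc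
  set qc : γ → ℝ := fun c => ∑ a, ∑ b, q a b c with hqc
  have hqac0 : ∀ a c, 0 ≤ qac a c := fun a c => Finset.sum_nonneg fun b _ => hq a b c
  have hqbc0 : ∀ b c, 0 ≤ qbc b c := fun b c => Finset.sum_nonneg fun a _ => hq a b c
  have hqc0 : ∀ c, 0 ≤ qc c := fun c => Finset.sum_nonneg fun a _ => hqac0 a c
  -- the pointwise quantity
  set u : α → β → γ → ℝ := fun a b c =>
    q a b c * (Real.log (q a b c) + Real.log (qc c) - Real.log (qac a c) - Real.log (qbc b c))
    with hu
  set r : α → β → γ → ℝ := fun a b c => qac a c * qbc b c / qc c with hr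
  have hr0 : ∀ a b c, 0 ≤ r a b c := fun a b c =>
    div_nonneg (mul_nonneg (hqac0 a c) (hqbc0 b c)) (hqc0 c)
  -- pointwise bound : q - r ≤ u
  have hpoint : ∀ a b c, q a b c - r a b c ≤ u a b c := by
    intro a b c
    rcases eq_or_lt_of_le (hq a b c) with h0 | h0
    · simp [hu, ← h0, hr0 a b c]
    · have hac : 0 < qac a c := lt_of_lt_of_le h0 (Finset.single_le_sum (fun b' _ => hq a b' c) (Finset.mem_univ b))
      have hbc : 0 < qbc b c := lt_of_lt_of_le h0 (Finset.single_le_sum (fun a' _ => hq a' b c) (Finset.mem_univ a))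
      have hc : 0 < qc c := lt_of_lt_of_le hac (Finset.single_le_sum (fun a' _ => hqac0 a' c) (Finset.mem_univ a))
      have hx : 0 < qac a c * qbc b c / (q a b c * qc c) :=
        div_pos (mul_pos hac hbc) (mul_pos h0 hc)
      have hlog : Real.log (qac a c * qbc b c / (q a b c * qc c))
          ≤ qac a c * qbc b c / (q a b c * qc c) - 1 := Real.log_le_sub_one_of_pos hx
      have hexp : Real.log (qac a c * qbc b c / (q a b c * qc c))
          = Real.log (qac a c) + Real.log (qbc b c) - Real.log (q a b c) - Real.log (qc c) := by
        rw [Real.log_div (by positivity) (by positivity), Real.log_mul hac.ne' hbc.ne',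
          Real.log_mul h0.ne' hc.ne']
        ring
      have := mul_le_mul_of_nonneg_left hlog (le_of_lt h0)
      rw [hexp] at this
      have hq' : q a b c * (qac a c * qbc b c / (q a b c * qc c) - 1)
          = r a b c - q a b c := by
        simp only [hr]
        field_simp
      rw [hq'] at this
      simp only [hu]
      nlinarith [this]
  -- sum of (q - r) is zero
  have hsum_r : ∀ c, (∑ a, ∑ b, r a b c) = qc c := by
    intro c
    rcases eq_or_lt_of_le (hqc0 c) with h0 | h0
    · have hz : ∀ a, qac a c = 0 := by
        intro a
        have h1 : qac a c ≤ qc c := Finset.single_le_sum (fun a' _ => hqac0 a' c) (Finset.mem_univ a)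
        linarith [hqac0 a c]
      simp [hr, hz, ← h0]
    · have : (∑ a, ∑ b, r a b c) = (∑ a, ∑ b, qac a c * qbc b c) / qc c := by
        rw [Finset.sum_div]
        exact Finset.sum_congr rfl fun a _ => by rw [Finset.sum_div]
      rw [this, ← Finset.sum_mul_sum]
      have h1 : (∑ a, qac a c) = qc c := rfl
      have h2 : (∑ b, qbc b c) = qc c := Finset.sum_comm
      rw [h1, h2]
      field_simp
  have swap3 : ∀ (F : α → β → γ → ℝ), (∑ a, ∑ b, ∑ c, F a b c) = ∑ c, ∑ a, ∑ b, F a b c := by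
    intro F
    calc (∑ a, ∑ b, ∑ c, F a b c) = ∑ a, ∑ c, ∑ b, F a b c :=
          Finset.sum_congr rfl fun a _ => Finset.sum_comm
      _ = ∑ c, ∑ a, ∑ b, F a b c := Finset.sum_comm
  have swap3' : ∀ (F : α → β → γ → ℝ), (∑ a, ∑ b, ∑ c, F a b c) = ∑ b, ∑ c, ∑ a, F a b c := by
    intro F
    calc (∑ a, ∑ b, ∑ c, F a b c) = ∑ b, ∑ a, ∑ c, F a b c := Finset.sum_comm
      _ = ∑ b, ∑ c, ∑ a, F a b c := Finset.sum_congr rfl fun b _ => Finset.sum_comm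
  have hsum_q : (∑ a, ∑ b, ∑ c, q a b c) = ∑ c, qc c := swap3 q
  have htot : (0:ℝ) ≤ ∑ a, ∑ b, ∑ c, u a b c := by
    have h1 : (∑ a, ∑ b, ∑ c, (q a b c - r a b c)) ≤ ∑ a, ∑ b, ∑ c, u a b c := by
      refine Finset.sum_le_sum fun a _ => Finset.sum_le_sum fun b _ => Finset.sum_le_sum fun c _ => hpoint a b c
    have h2 : (∑ a, ∑ b, ∑ c, (q a b c - r a b c)) = 0 := by
      have hrr : (∑ a, ∑ b, ∑ c, r a b c) = ∑ c, qc c := by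
        rw [swap3 r]
        exact Finset.sum_congr rfl fun c _ => hsum_r c
      simp only [Finset.sum_sub_distrib]
      rw [hsum_q, hrr]
      ring
    linarith
  -- now identify RHS - LHS with ∑ u
  have hid : (∑ a, ∑ c, Real.negMulLog (qac a c)) + (∑ b, ∑ c, Real.negMulLog (qbc b c))
      - (∑ a, ∑ b, ∑ c, Real.negMulLog (q a b c)) - (∑ c, Real.negMulLog (qc c))
      = ∑ a, ∑ b, ∑ c, u a b c := by
    have e1' : ∀ a c, Real.negMulLog (qac a c) = ∑ b, q a b c * (-Real.log (qac a c)) := by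
      intro a c
      rw [← Finset.sum_mul]
      have h : (∑ b, q a b c) = qac a c := rfl
      rw [h, Real.negMulLog]
      ring
    have e2' : ∀ b c, Real.negMulLog (qbc b c) = ∑ a, q a b c * (-Real.log (qbc b c)) := by
      intro b c
      rw [← Finset.sum_mul]
      have h : (∑ a, q a b c) = qbc b c := rfl
      rw [h, Real.negMulLog]
      ring
    have e3' : ∀ c, Real.negMulLog (qc c) = ∑ a, ∑ b, q a b c * (-Real.log (qc c)) := by
      intro c
      have h : (∑ a, ∑ b, q a b c * (-Real.log (qc c)))
          = (∑ a, ∑ b, q a b c) * (-Real.log (qc c)) := by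
        rw [Finset.sum_mul]
        exact Finset.sum_congr rfl fun a _ => by rw [Finset.sum_mul]
      rw [h]
      have h2 : (∑ a, ∑ b, q a b c) = qc c := rfl
      rw [h2, Real.negMulLog]
      ring
    have e1 : (∑ a, ∑ c, Real.negMulLog (qac a c))
        = ∑ a, ∑ b, ∑ c, (q a b c * (- Real.log (qac a c))) := by
      refine Finset.sum_congr rfl fun a _ => ?_
      rw [Finset.sum_comm]
      exact Finset.sum_congr rfl fun c _ => e1' a c
    have e2 : (∑ b, ∑ c, Real.negMulLog (qbc b c))
        = ∑ a, ∑ b, ∑ c, (q a b c * (- Real.log (qbc b c))) := by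
      rw [swap3' (fun a b c => q a b c * (- Real.log (qbc b c)))]
      exact Finset.sum_congr rfl fun b _ => Finset.sum_congr rfl fun c _ => e2' b c
    have e3 : (∑ c, Real.negMulLog (qc c))
        = ∑ a, ∑ b, ∑ c, (q a b c * (- Real.log (qc c))) := by
      rw [swap3 (fun a b c => q a b c * (- Real.log (qc c)))]
      exact Finset.sum_congr rfl fun c _ => e3' c
    rw [e1, e2, e3]
    simp only [← Finset.sum_sub_distrib, ← Finset.sum_add_distrib, Real.negMulLog]
    refine Finset.sum_congr rfl fun a _ => Finset.sum_congr rfl fun b _ => Finset.sum_congr rfl fun c _ => ?_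
    simp only [hu]
    ring
  linarith

lemma condMutInfoOf_nonneg {Ω α β γ : Type*} [Fintype Ω] [Fintype α] [DecidableEq α]
    [Fintype β] [DecidableEq β] [Fintype γ] [DecidableEq γ]
    (p : Ω → ℝ) (hp : ∀ ω, 0 ≤ p ω) (f : Ω → α) (g : Ω → β) (h : Ω → γ) :
    0 ≤ condMutInfoOf p f g h := by
  set q : α → β → γ → ℝ := fun a b c => distOf p (fun ω => (f ω, (g ω, h ω))) (a, (b, c)) with hq
  have hq0 : ∀ a b c, 0 ≤ q a b c := fun a b c => distOf_nonneg p hp _ _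
  have m1 : ∀ a c, distOf p (fun ω => (f ω, h ω)) (a, c) = ∑ b, q a b c := by
    intro a c
    simp only [hq, distOf_eq_sum_ite, Prod.mk.injEq]
    rw [Finset.sum_comm]
    refine Finset.sum_congr rfl fun ω _ => ?_
    by_cases h1 : f ω = a <;> by_cases h2 : h ω = c <;> simp [h1, h2]
  have m2 : ∀ b c, distOf p (fun ω => (g ω, h ω)) (b, c) = ∑ a, q a b c := by
    intro b c
    simp only [hq, distOf_eq_sum_ite, Prod.mk.injEq]
    rw [Finset.sum_comm]
    refine Finset.sum_congr rfl fun ω _ => ?_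
    by_cases h1 : g ω = b <;> by_cases h2 : h ω = c <;> simp [h1, h2]
  have m3 : ∀ c, distOf p h c = ∑ a, ∑ b, q a b c := by
    intro c
    simp only [hq, distOf_eq_sum_ite, Prod.mk.injEq]
    rw [show (∑ a, ∑ b, ∑ ω, if f ω = a ∧ g ω = b ∧ h ω = c then p ω else 0)
        = ∑ ω, ∑ a, ∑ b, if f ω = a ∧ g ω = b ∧ h ω = c then p ω else 0 from
      sum3_comm (fun a b ω => if f ω = a ∧ g ω = b ∧ h ω = c then p ω else 0)]
    refine Finset.sum_congr rfl fun ω _ => ?_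
    by_cases h2 : h ω = c <;> simp [h2, ite_and, Finset.sum_ite_eq]
  have e_fgh : entOf p (fun ω => (f ω, (g ω, h ω)))
      = (∑ a, ∑ b, ∑ c, Real.negMulLog (q a b c)) / Real.log 2 := by
    rw [entOf]
    congr 1
    rw [Fintype.sum_prod_type]
    exact Finset.sum_congr rfl fun a _ => by rw [Fintype.sum_prod_type]
  have e_fh : entOf p (fun ω => (f ω, h ω))
      = (∑ a, ∑ c, Real.negMulLog (∑ b, q a b c)) / Real.log 2 := by
    rw [entOf]
    congr 1
    rw [Fintype.sum_prod_type]
    exact Finset.sum_congr rfl fun a _ => Finset.sum_congr rfl fun c _ => by rw [m1]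
  have e_gh : entOf p (fun ω => (g ω, h ω))
      = (∑ b, ∑ c, Real.negMulLog (∑ a, q a b c)) / Real.log 2 := by
    rw [entOf]
    congr 1
    rw [Fintype.sum_prod_type]
    exact Finset.sum_congr rfl fun b _ => Finset.sum_congr rfl fun c _ => by rw [m2]
  have e_h : entOf p h = (∑ c, Real.negMulLog (∑ a, ∑ b, q a b c)) / Real.log 2 := by
    rw [entOf]
    congr 1
    exact Finset.sum_congr rfl fun c _ => by rw [m3]
  have key := submodular_key q hq0
  simp only [condMutInfoOf, condEntOf]
  rw [e_fgh, e_fh, e_gh, e_h]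
  rw [show ∀ S1 S2 S3 S4 L : ℝ, (S1/L - S4/L) - (S3/L - S2/L) = (S1 + S2 - S3 - S4)/L from
    fun S1 S2 S3 S4 L => by ring]
  apply div_nonneg _ (Real.log_nonneg one_le_two)
  linarith

/-- if M^{m−1} → (M_m,E_m) → Y_{e,m} and
(M_m,E_m,Y_{e,m}) → (M^{m−1},E_{m−1}) → Y_e^{m−1} are Markov chains conditioned
on F^m, then I(M^m,E_m; Y_e^m | F^m) ≤ I(M_m,E_m; Y_{e,m} | F^m)
+ I(M^{m−1},E_{m−1}; Y_e^{m−1} | F^m). -/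
theorem recursive_leakage_decomposition
    {Ω A A' B B' C C' D : Type*} [Fintype Ω]
    [Fintype A] [DecidableEq A] [Fintype A'] [DecidableEq A']
    [Fintype B] [DecidableEq B] [Fintype B'] [DecidableEq B']
    [Fintype C] [DecidableEq C] [Fintype C'] [DecidableEq C']
    [Fintype D] [DecidableEq D]
    (p : Ω → ℝ) (hp : ∀ ω, 0 ≤ p ω) (hp1 : ∑ ω, p ω = 1)
    (Mprev : Ω → A) (Mm : Ω → A') (Eprev : Ω → B) (Em : Ω → B')
    (Yeprev : Ω → C) (Yem : Ω → C') (Fm : Ω → D)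
    (hmc1 : condMutInfoOf p Mprev Yem (fun ω => ((Mm ω, Em ω), Fm ω)) = 0)
    (hmc2 : condMutInfoOf p (fun ω => (Mm ω, Em ω, Yem ω)) Yeprev
      (fun ω => ((Mprev ω, Eprev ω), Fm ω)) = 0) :
    condMutInfoOf p (fun ω => ((Mprev ω, Mm ω), Em ω)) (fun ω => (Yeprev ω, Yem ω)) Fm
      ≤ condMutInfoOf p (fun ω => (Mm ω, Em ω)) Yem Fm
        + condMutInfoOf p (fun ω => (Mprev ω, Eprev ω)) Yeprev Fm := by
  have n1 : 0 ≤ condMutInfoOf p Eprev Yeprev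
      (fun ω => (Mprev ω, (Mm ω, (Em ω, (Yem ω, Fm ω))))) :=
    condMutInfoOf_nonneg p hp _ _ _
  have n2 : 0 ≤ condMutInfoOf p Yem Yeprev Fm := condMutInfoOf_nonneg p hp _ _ _
  have eqq1 : entOf p (fun ω => (((Mprev ω, Mm ω), Em ω), Fm ω)) = entOf p (fun ω => (Mprev ω, (Mm ω, (Em ω, Fm ω)))) :=
    entOf_congr p (fun ω => (Mprev ω, (Mm ω, (Em ω, Fm ω)))) (fun ω => (((Mprev ω, Mm ω), Em ω), Fm ω))
      (fun x => (((x.1, x.2.1), x.2.2.1), x.2.2.2))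
      (Function.LeftInverse.injective (g := fun y => (y.1.1.1, (y.1.1.2, (y.1.2, y.2)))) (fun x => rfl)) (fun ω => rfl)
  have eqq2 : entOf p (fun ω => (((Mprev ω, Mm ω), Em ω), ((Yeprev ω, Yem ω), Fm ω))) = entOf p (fun ω => (Mprev ω, (Mm ω, (Em ω, (Yeprev ω, (Yem ω, Fm ω)))))) :=
    entOf_congr p (fun ω => (Mprev ω, (Mm ω, (Em ω, (Yeprev ω, (Yem ω, Fm ω)))))) (fun ω => (((Mprev ω, Mm ω), Em ω), ((Yeprev ω, Yem ω), Fm ω)))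
      (fun x => (((x.1, x.2.1), x.2.2.1), ((x.2.2.2.1, x.2.2.2.2.1), x.2.2.2.2.2)))
      (Function.LeftInverse.injective (g := fun y => (y.1.1.1, (y.1.1.2, (y.1.2, (y.2.1.1, (y.2.1.2, y.2.2)))))) (fun x => rfl)) (fun ω => rfl)
  have eqq3 : entOf p (fun ω => ((Yeprev ω, Yem ω), Fm ω)) = entOf p (fun ω => (Yeprev ω, (Yem ω, Fm ω))) :=
    entOf_congr p (fun ω => (Yeprev ω, (Yem ω, Fm ω))) (fun ω => ((Yeprev ω, Yem ω), Fm ω))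
      (fun x => ((x.1, x.2.1), x.2.2))
      (Function.LeftInverse.injective (g := fun y => (y.1.1, (y.1.2, y.2))) (fun x => rfl)) (fun ω => rfl)
  have eqq4 : entOf p (fun ω => ((Mm ω, Em ω), Fm ω)) = entOf p (fun ω => (Mm ω, (Em ω, Fm ω))) :=
    entOf_congr p (fun ω => (Mm ω, (Em ω, Fm ω))) (fun ω => ((Mm ω, Em ω), Fm ω))
      (fun x => ((x.1, x.2.1), x.2.2))
      (Function.LeftInverse.injective (g := fun y => (y.1.1, (y.1.2, y.2))) (fun x => rfl)) (fun ω => rfl)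
  have eqq5 : entOf p (fun ω => ((Mm ω, Em ω), (Yem ω, Fm ω))) = entOf p (fun ω => (Mm ω, (Em ω, (Yem ω, Fm ω)))) :=
    entOf_congr p (fun ω => (Mm ω, (Em ω, (Yem ω, Fm ω)))) (fun ω => ((Mm ω, Em ω), (Yem ω, Fm ω)))
      (fun x => ((x.1, x.2.1), (x.2.2.1, x.2.2.2)))
      (Function.LeftInverse.injective (g := fun y => (y.1.1, (y.1.2, (y.2.1, y.2.2)))) (fun x => rfl)) (fun ω => rfl)
  have eqq6 : entOf p (fun ω => ((Mprev ω, Eprev ω), Fm ω)) = entOf p (fun ω => (Mprev ω, (Eprev ω, Fm ω))) :=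
    entOf_congr p (fun ω => (Mprev ω, (Eprev ω, Fm ω))) (fun ω => ((Mprev ω, Eprev ω), Fm ω))
      (fun x => ((x.1, x.2.1), x.2.2))
      (Function.LeftInverse.injective (g := fun y => (y.1.1, (y.1.2, y.2))) (fun x => rfl)) (fun ω => rfl)
  have eqq7 : entOf p (fun ω => ((Mprev ω, Eprev ω), (Yeprev ω, Fm ω))) = entOf p (fun ω => (Mprev ω, (Eprev ω, (Yeprev ω, Fm ω)))) :=
    entOf_congr p (fun ω => (Mprev ω, (Eprev ω, (Yeprev ω, Fm ω)))) (fun ω => ((Mprev ω, Eprev ω), (Yeprev ω, Fm ω)))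
      (fun x => ((x.1, x.2.1), (x.2.2.1, x.2.2.2)))
      (Function.LeftInverse.injective (g := fun y => (y.1.1, (y.1.2, (y.2.1, y.2.2)))) (fun x => rfl)) (fun ω => rfl)
  have eqq8 : entOf p (fun ω => (Mprev ω, ((Mm ω, Em ω), Fm ω))) = entOf p (fun ω => (Mprev ω, (Mm ω, (Em ω, Fm ω)))) :=
    entOf_congr p (fun ω => (Mprev ω, (Mm ω, (Em ω, Fm ω)))) (fun ω => (Mprev ω, ((Mm ω, Em ω), Fm ω)))
      (fun x => (x.1, ((x.2.1, x.2.2.1), x.2.2.2)))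
      (Function.LeftInverse.injective (g := fun y => (y.1, (y.2.1.1, (y.2.1.2, y.2.2)))) (fun x => rfl)) (fun ω => rfl)
  have eqq9 : entOf p (fun ω => ((Mm ω, Em ω), Fm ω)) = entOf p (fun ω => (Mm ω, (Em ω, Fm ω))) :=
    entOf_congr p (fun ω => (Mm ω, (Em ω, Fm ω))) (fun ω => ((Mm ω, Em ω), Fm ω))
      (fun x => ((x.1, x.2.1), x.2.2))
      (Function.LeftInverse.injective (g := fun y => (y.1.1, (y.1.2, y.2))) (fun x => rfl)) (fun ω => rfl)
  have eqq10 : entOf p (fun ω => (Mprev ω, (Yem ω, ((Mm ω, Em ω), Fm ω)))) = entOf p (fun ω => (Mprev ω, (Mm ω, (Em ω, (Yem ω, Fm ω))))) :=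
    entOf_congr p (fun ω => (Mprev ω, (Mm ω, (Em ω, (Yem ω, Fm ω))))) (fun ω => (Mprev ω, (Yem ω, ((Mm ω, Em ω), Fm ω))))
      (fun x => (x.1, (x.2.2.2.1, ((x.2.1, x.2.2.1), x.2.2.2.2))))
      (Function.LeftInverse.injective (g := fun y => (y.1, (y.2.2.1.1, (y.2.2.1.2, (y.2.1, y.2.2.2))))) (fun x => rfl)) (fun ω => rfl)
  have eqq11 : entOf p (fun ω => (Yem ω, ((Mm ω, Em ω), Fm ω))) = entOf p (fun ω => (Mm ω, (Em ω, (Yem ω, Fm ω)))) :=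
    entOf_congr p (fun ω => (Mm ω, (Em ω, (Yem ω, Fm ω)))) (fun ω => (Yem ω, ((Mm ω, Em ω), Fm ω)))
      (fun x => (x.2.2.1, ((x.1, x.2.1), x.2.2.2)))
      (Function.LeftInverse.injective (g := fun y => (y.2.1.1, (y.2.1.2, (y.1, y.2.2)))) (fun x => rfl)) (fun ω => rfl)
  have eqq12 : entOf p (fun ω => ((Mm ω, (Em ω, Yem ω)), ((Mprev ω, Eprev ω), Fm ω))) = entOf p (fun ω => (Mprev ω, (Mm ω, (Eprev ω, (Em ω, (Yem ω, Fm ω)))))) :=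
    entOf_congr p (fun ω => (Mprev ω, (Mm ω, (Eprev ω, (Em ω, (Yem ω, Fm ω)))))) (fun ω => ((Mm ω, (Em ω, Yem ω)), ((Mprev ω, Eprev ω), Fm ω)))
      (fun x => ((x.2.1, (x.2.2.2.1, x.2.2.2.2.1)), ((x.1, x.2.2.1), x.2.2.2.2.2)))
      (Function.LeftInverse.injective (g := fun y => (y.2.1.1, (y.1.1, (y.2.1.2, (y.1.2.1, (y.1.2.2, y.2.2)))))) (fun x => rfl)) (fun ω => rfl)
  have eqq13 : entOf p (fun ω => ((Mprev ω, Eprev ω), Fm ω)) = entOf p (fun ω => (Mprev ω, (Eprev ω, Fm ω))) :=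
    entOf_congr p (fun ω => (Mprev ω, (Eprev ω, Fm ω))) (fun ω => ((Mprev ω, Eprev ω), Fm ω))
      (fun x => ((x.1, x.2.1), x.2.2))
      (Function.LeftInverse.injective (g := fun y => (y.1.1, (y.1.2, y.2))) (fun x => rfl)) (fun ω => rfl)
  have eqq14 : entOf p (fun ω => ((Mm ω, (Em ω, Yem ω)), (Yeprev ω, ((Mprev ω, Eprev ω), Fm ω)))) = entOf p (fun ω => (Mprev ω, (Mm ω, (Eprev ω, (Em ω, (Yeprev ω, (Yem ω, Fm ω))))))) :=
    entOf_congr p (fun ω => (Mprev ω, (Mm ω, (Eprev ω, (Em ω, (Yeprev ω, (Yem ω, Fm ω))))))) (fun ω => ((Mm ω, (Em ω, Yem ω)), (Yeprev ω, ((Mprev ω, Eprev ω), Fm ω))))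
      (fun x => ((x.2.1, (x.2.2.2.1, x.2.2.2.2.2.1)), (x.2.2.2.2.1, ((x.1, x.2.2.1), x.2.2.2.2.2.2))))
      (Function.LeftInverse.injective (g := fun y => (y.2.2.1.1, (y.1.1, (y.2.2.1.2, (y.1.2.1, (y.2.1, (y.1.2.2, y.2.2.2))))))) (fun x => rfl)) (fun ω => rfl)
  have eqq15 : entOf p (fun ω => (Yeprev ω, ((Mprev ω, Eprev ω), Fm ω))) = entOf p (fun ω => (Mprev ω, (Eprev ω, (Yeprev ω, Fm ω)))) :=
    entOf_congr p (fun ω => (Mprev ω, (Eprev ω, (Yeprev ω, Fm ω)))) (fun ω => (Yeprev ω, ((Mprev ω, Eprev ω), Fm ω)))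
      (fun x => (x.2.2.1, ((x.1, x.2.1), x.2.2.2)))
      (Function.LeftInverse.injective (g := fun y => (y.2.1.1, (y.2.1.2, (y.1, y.2.2)))) (fun x => rfl)) (fun ω => rfl)
  have eqq16 : entOf p (fun ω => (Eprev ω, (Mprev ω, (Mm ω, (Em ω, (Yem ω, Fm ω)))))) = entOf p (fun ω => (Mprev ω, (Mm ω, (Eprev ω, (Em ω, (Yem ω, Fm ω)))))) :=
    entOf_congr p (fun ω => (Mprev ω, (Mm ω, (Eprev ω, (Em ω, (Yem ω, Fm ω)))))) (fun ω => (Eprev ω, (Mprev ω, (Mm ω, (Em ω, (Yem ω, Fm ω))))))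
      (fun x => (x.2.2.1, (x.1, (x.2.1, (x.2.2.2.1, (x.2.2.2.2.1, x.2.2.2.2.2))))))
      (Function.LeftInverse.injective (g := fun y => (y.2.1, (y.2.2.1, (y.1, (y.2.2.2.1, (y.2.2.2.2.1, y.2.2.2.2.2)))))) (fun x => rfl)) (fun ω => rfl)
  have eqq17 : entOf p (fun ω => (Eprev ω, (Yeprev ω, (Mprev ω, (Mm ω, (Em ω, (Yem ω, Fm ω))))))) = entOf p (fun ω => (Mprev ω, (Mm ω, (Eprev ω, (Em ω, (Yeprev ω, (Yem ω, Fm ω))))))) :=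
    entOf_congr p (fun ω => (Mprev ω, (Mm ω, (Eprev ω, (Em ω, (Yeprev ω, (Yem ω, Fm ω))))))) (fun ω => (Eprev ω, (Yeprev ω, (Mprev ω, (Mm ω, (Em ω, (Yem ω, Fm ω)))))))
      (fun x => (x.2.2.1, (x.2.2.2.2.1, (x.1, (x.2.1, (x.2.2.2.1, (x.2.2.2.2.2.1, x.2.2.2.2.2.2)))))))
      (Function.LeftInverse.injective (g := fun y => (y.2.2.1, (y.2.2.2.1, (y.1, (y.2.2.2.2.1, (y.2.1, (y.2.2.2.2.2.1, y.2.2.2.2.2.2))))))) (fun x => rfl)) (fun ω => rfl)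
  have eqq18 : entOf p (fun ω => (Yeprev ω, (Mprev ω, (Mm ω, (Em ω, (Yem ω, Fm ω)))))) = entOf p (fun ω => (Mprev ω, (Mm ω, (Em ω, (Yeprev ω, (Yem ω, Fm ω)))))) :=
    entOf_congr p (fun ω => (Mprev ω, (Mm ω, (Em ω, (Yeprev ω, (Yem ω, Fm ω)))))) (fun ω => (Yeprev ω, (Mprev ω, (Mm ω, (Em ω, (Yem ω, Fm ω))))))
      (fun x => (x.2.2.2.1, (x.1, (x.2.1, (x.2.2.1, (x.2.2.2.2.1, x.2.2.2.2.2))))))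
      (Function.LeftInverse.injective (g := fun y => (y.2.1, (y.2.2.1, (y.2.2.2.1, (y.1, (y.2.2.2.2.1, y.2.2.2.2.2)))))) (fun x => rfl)) (fun ω => rfl)
  have eqq19 : entOf p (fun ω => (Yem ω, (Yeprev ω, Fm ω))) = entOf p (fun ω => (Yeprev ω, (Yem ω, Fm ω))) :=
    entOf_congr p (fun ω => (Yeprev ω, (Yem ω, Fm ω))) (fun ω => (Yem ω, (Yeprev ω, Fm ω)))
      (fun x => (x.2.1, (x.1, x.2.2)))
      (Function.LeftInverse.injective (g := fun y => (y.2.1, (y.1, y.2.2))) (fun x => rfl)) (fun ω => rfl)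

  have cmiL : condMutInfoOf p (fun ω => ((Mprev ω, Mm ω), Em ω)) (fun ω => (Yeprev ω, Yem ω)) Fm = entOf p (fun ω => (Mprev ω, (Mm ω, (Em ω, Fm ω)))) - entOf p Fm - (entOf p (fun ω => (Mprev ω, (Mm ω, (Em ω, (Yeprev ω, (Yem ω, Fm ω)))))) - entOf p (fun ω => (Yeprev ω, (Yem ω, Fm ω)))) := by
    simp only [condMutInfoOf, condEntOf, eqq1, eqq2, eqq3]
  have cmiR1 : condMutInfoOf p (fun ω => (Mm ω, Em ω)) Yem Fm = entOf p (fun ω => (Mm ω, (Em ω, Fm ω))) - entOf p Fm - (entOf p (fun ω => (Mm ω, (Em ω, (Yem ω, Fm ω)))) - entOf p (fun ω => (Yem ω, Fm ω))) := by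
    simp only [condMutInfoOf, condEntOf, eqq4, eqq5]
  have cmiR2 : condMutInfoOf p (fun ω => (Mprev ω, Eprev ω)) Yeprev Fm = entOf p (fun ω => (Mprev ω, (Eprev ω, Fm ω))) - entOf p Fm - (entOf p (fun ω => (Mprev ω, (Eprev ω, (Yeprev ω, Fm ω)))) - entOf p (fun ω => (Yeprev ω, Fm ω))) := by
    simp only [condMutInfoOf, condEntOf, eqq6, eqq7]
  have cmiH1 : condMutInfoOf p Mprev Yem (fun ω => ((Mm ω, Em ω), Fm ω)) = entOf p (fun ω => (Mprev ω, (Mm ω, (Em ω, Fm ω)))) - entOf p (fun ω => (Mm ω, (Em ω, Fm ω))) - (entOf p (fun ω => (Mprev ω, (Mm ω, (Em ω, (Yem ω, Fm ω))))) - entOf p (fun ω => (Mm ω, (Em ω, (Yem ω, Fm ω))))) := by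
    simp only [condMutInfoOf, condEntOf, eqq8, eqq9, eqq10, eqq11]
  have cmiH2 : condMutInfoOf p (fun ω => (Mm ω, (Em ω, Yem ω))) Yeprev (fun ω => ((Mprev ω, Eprev ω), Fm ω)) = entOf p (fun ω => (Mprev ω, (Mm ω, (Eprev ω, (Em ω, (Yem ω, Fm ω)))))) - entOf p (fun ω => (Mprev ω, (Eprev ω, Fm ω))) - (entOf p (fun ω => (Mprev ω, (Mm ω, (Eprev ω, (Em ω, (Yeprev ω, (Yem ω, Fm ω))))))) - entOf p (fun ω => (Mprev ω, (Eprev ω, (Yeprev ω, Fm ω))))) := by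
    simp only [condMutInfoOf, condEntOf, eqq12, eqq13, eqq14, eqq15]
  have cmiN1 : condMutInfoOf p Eprev Yeprev (fun ω => (Mprev ω, (Mm ω, (Em ω, (Yem ω, Fm ω))))) = entOf p (fun ω => (Mprev ω, (Mm ω, (Eprev ω, (Em ω, (Yem ω, Fm ω)))))) - entOf p (fun ω => (Mprev ω, (Mm ω, (Em ω, (Yem ω, Fm ω))))) - (entOf p (fun ω => (Mprev ω, (Mm ω, (Eprev ω, (Em ω, (Yeprev ω, (Yem ω, Fm ω))))))) - entOf p (fun ω => (Mprev ω, (Mm ω, (Em ω, (Yeprev ω, (Yem ω, Fm ω))))))) := by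
    simp only [condMutInfoOf, condEntOf, eqq16, eqq17, eqq18]
  have cmiN2 : condMutInfoOf p Yem Yeprev Fm = entOf p (fun ω => (Yem ω, Fm ω)) - entOf p Fm - (entOf p (fun ω => (Yeprev ω, (Yem ω, Fm ω))) - entOf p (fun ω => (Yeprev ω, Fm ω))) := by
    simp only [condMutInfoOf, condEntOf, eqq19]

  rw [cmiH1] at hmc1
  rw [cmiH2] at hmc2
  rw [cmiN1] at n1
  rw [cmiN2] at n2
  rw [cmiL, cmiR1, cmiR2]
  linarith
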